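/- Let A be an n×n real matrix whose off-diagonal entries are all nonnegative, let g : [0,T] → ℝ^n be continuous with g(t)_i ≤ 0 for all i and all t ∈ [0,T], and let x : [0,T] → ℝ^n solve the linear ODE x'(t) = A x(t) + g(t) with x(0)_i ≤ 0 for all i. Then x(t)_i ≤ 0 for all i and all t ∈ [0,T]. -/

import Mathlib

open Set Filter Topology


/-- Maximum principle for linear ODE systems with Metzler matrices. -/
theorem metzler_ode_comparison (n : ℕ) (T : ℝ) (hT : 0 ≤ T)
    (A : Matrix (Fin n) (Fin n) ℝ)
    (hA : ∀ i j, i ≠ j → 0 ≤ A i j)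
    (g : ℝ → Fin n → ℝ)
    (hg_cont : ContinuousOn g (Set.Icc 0 T))
    (hg : ∀ t ∈ Set.Icc (0:ℝ) T, ∀ i, g t i ≤ 0)
    (x : ℝ → Fin n → ℝ)
    (hx : ∀ t ∈ Set.Icc (0:ℝ) T, ∀ i,
      HasDerivWithinAt (fun s => x s i) (A.mulVec (x t) i + g t i) (Set.Icc 0 T) t)
    (hx0 : ∀ i, x 0 i ≤ 0) :
    ∀ t ∈ Set.Icc (0:ℝ) T, ∀ i, x t i ≤ 0 := by
  rcases Nat.eq_zero_or_pos n with hn | hn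
  · subst hn; intro t ht i; exact i.elim0
  haveI : NeZero n := ⟨hn.ne'⟩
  have hne : (Finset.univ : Finset (Fin n)).Nonempty := Finset.univ_nonempty
  have hxc : ∀ i, ContinuousOn (fun s => x s i) (Set.Icc 0 T) :=
    fun i t ht => (hx t ht i).continuousWithinAt
  set K : ℝ := (∑ i, ∑ j, |A i j|) + 1 with hKdef
  have hrowK : ∀ j, (∑ k, |A j k|) < K := by
    intro j
    have h1 : (∑ k, |A j k|) ≤ ∑ i, ∑ k, |A i k| := by
      apply Finset.single_le_sum (f := fun i => ∑ k, |A i k|)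
      · intro i _; positivity
      · exact Finset.mem_univ j
    linarith
  set f : ℝ → ℝ := fun t => Finset.univ.sup' hne (fun i => x t i) with hfdef
  have hxle : ∀ t i, x t i ≤ f t := fun t i => Finset.le_sup' (fun i => x t i) (Finset.mem_univ i)
  have hfex : ∀ t, ∃ j, x t j = f t := by
    intro t
    obtain ⟨j, -, h⟩ := Finset.exists_mem_eq_sup' hne (fun i => x t i)
    exact ⟨j, h.symm⟩
  have hfc : ContinuousOn f (Set.Icc 0 T) :=
    ContinuousOn.finset_sup'_apply hne (fun i _ => hxc i)
  set d : ℝ → Fin n → ℝ := fun t j => A.mulVec (x t) j + g t j with hddef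
  have hSne : ∀ t, (Finset.univ.filter (fun j => x t j = f t)).Nonempty := by
    intro t
    obtain ⟨j, hj⟩ := hfex t
    exact ⟨j, Finset.mem_filter.2 ⟨Finset.mem_univ j, hj⟩⟩
  set f' : ℝ → ℝ := fun t =>
    (Finset.univ.filter (fun j => x t j = f t)).sup' (hSne t) (d t) with hf'def
  -- slope of each coordinate tends to d t j along right nhds, for t ∈ Ico 0 T
  have hslopetendsto : ∀ t ∈ Set.Ico (0:ℝ) T, ∀ j,
      Tendsto (slope (fun s => x s j) t) (𝓝[>] t) (𝓝 (d t j)) := by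
    intro t ht j
    have h1 : HasDerivWithinAt (fun s => x s j) (d t j) (Set.Ioc t T) t :=
      (hx t ⟨ht.1, ht.2.le⟩ j).mono (fun z hz => ⟨ht.1.trans hz.1.le, hz.2⟩)
    have h2 := hasDerivWithinAt_iff_tendsto_slope.1 h1
    have h3 : Set.Ioc t T \ {t} = Set.Ioc t T := by
      apply Set.diff_singleton_eq_self; simp
    rw [h3, nhdsWithin_Ioc_eq_nhdsGT ht.2] at h2
    exact h2
  have hfilter : ∀ t ∈ Set.Ico (0:ℝ) T, 𝓝[>] t ≤ 𝓝[Set.Icc (0:ℝ) T] t := by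
    intro t ht
    rw [← nhdsWithin_Ioc_eq_nhdsGT ht.2]
    exact nhdsWithin_mono t (fun z hz => ⟨ht.1.trans hz.1.le, hz.2⟩)
  -- key slope estimate for f
  have hf' : ∀ t ∈ Set.Ico (0:ℝ) T, ∀ r, f' t < r →
      ∃ᶠ z in 𝓝[>] t, slope f t z < r := by
    intro t ht r hr
    by_contra hcon
    rw [Filter.not_frequently] at hcon
    have hev : ∀ᶠ z in 𝓝[>] t, r ≤ slope f t z := hcon.mono (fun z hz => not_lt.1 hz)
    have hex : ∃ j, ∃ᶠ z in 𝓝[>] t, x z j = f z ∧ r ≤ slope f t z ∧ t < z := by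
      by_contra hc
      simp only [not_exists] at hc
      have h1 : ∀ᶠ z in 𝓝[>] t, ∀ j, ¬(x z j = f z ∧ r ≤ slope f t z ∧ t < z) :=
        eventually_all.2 (fun j => Filter.not_frequently.1 (hc j))
      obtain ⟨z, hz1, hz2, hz3⟩ := (h1.and (hev.and eventually_mem_nhdsWithin)).exists
      obtain ⟨j, hj⟩ := hfex z
      exact hz1 j ⟨hj, hz2, hz3⟩
    obtain ⟨j, hj⟩ := hex
    have hs : ∃ᶠ z in 𝓝[>] t, r ≤ slope (fun s => x s j) t z := by
      refine hj.mono ?_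
      rintro z ⟨hz1, hz2, hz3⟩
      have hzt : (0:ℝ) < z - t := by linarith
      rw [slope_def_field] at hz2 ⊢
      have hle : f z - f t ≤ x z j - x t j := by
        have := hxle t j; rw [hz1] at *; linarith
      calc r ≤ (f z - f t) / (z - t) := hz2
        _ ≤ (x z j - x t j) / (z - t) := by gcongr
    have hdj : r ≤ d t j := by
      by_contra hlt
      push_neg at hlt
      have h2 : ∀ᶠ z in 𝓝[>] t, slope (fun s => x s j) t z < r :=
        (hslopetendsto t ht j).eventually_lt_const hlt
      obtain ⟨z, hz1, hz2⟩ := (hs.and_eventually h2).exists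
      linarith
    -- j is active at t
    have hjact : x t j = f t := by
      have h1 : Tendsto (fun z => x z j) (𝓝[>] t) (𝓝 (x t j)) :=
        ((hxc j t ⟨ht.1, ht.2.le⟩).tendsto).mono_left (hfilter t ht)
      have h2 : Tendsto f (𝓝[>] t) (𝓝 (f t)) :=
        ((hfc t ⟨ht.1, ht.2.le⟩).tendsto).mono_left (hfilter t ht)
      exact tendsto_nhds_unique_of_frequently_eq h1 h2 (hj.mono (fun z hz => hz.1))
    have : d t j ≤ f' t :=
      Finset.le_sup' (d t) (Finset.mem_filter.2 ⟨Finset.mem_univ j, hjact⟩)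
    linarith
  -- ε-bound via the fencing theorem
  have key : ∀ ε : ℝ, 0 < ε → ∀ t ∈ Set.Icc (0:ℝ) T, f t ≤ ε * Real.exp (K * t) := by
    intro ε hε
    have hB : ∀ s : ℝ, HasDerivAt (fun u => ε * Real.exp (K * u)) (K * (ε * Real.exp (K * s))) s := by
      intro s
      have := (((hasDerivAt_id s).const_mul K).exp).const_mul ε
      simpa [mul_comm, mul_assoc, mul_left_comm] using this
    have ha : f 0 ≤ ε * Real.exp (K * 0) := by
      have : f 0 ≤ 0 := Finset.sup'_le hne _ (fun i _ => hx0 i)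
      have h0 : (0:ℝ) < ε * Real.exp (K * 0) := by positivity
      linarith
    refine image_le_of_liminf_slope_right_lt_deriv_boundary hfc hf' ha hB ?_
    -- contact bound
    intro t ht hcontact
    set b : ℝ := ε * Real.exp (K * t) with hbdef
    have hb : 0 < b := by positivity
    rw [hf'def]
    rw [Finset.sup'_lt_iff]
    intro j hj
    rw [Finset.mem_filter] at hj
    have hxj : x t j = b := by rw [hj.2, hcontact]
    have hgj : g t j ≤ 0 := hg t ⟨ht.1, ht.2.le⟩ j
    have hterm : ∀ k, A j k * x t k ≤ |A j k| * b := by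
      intro k
      rcases eq_or_ne k j with hkj | hkj
      · rw [hkj, hxj]
        have h1 : A j j ≤ |A j j| := le_abs_self _
        nlinarith
      · have hpos : 0 ≤ A j k := hA j k (Ne.symm hkj)
        have hxk : x t k ≤ b := by rw [← hcontact]; exact hxle t k
        calc A j k * x t k ≤ A j k * b := by nlinarith
          _ ≤ |A j k| * b := by
              have : A j k ≤ |A j k| := le_abs_self _
              nlinarith
    have hmv : A.mulVec (x t) j = ∑ k, A j k * x t k := by
      simp [Matrix.mulVec, dotProduct]
    have hsum : (∑ k, A j k * x t k) ≤ (∑ k, |A j k|) * b := by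
      rw [Finset.sum_mul]
      exact Finset.sum_le_sum (fun k _ => hterm k)
    have : d t j ≤ (∑ k, |A j k|) * b := by
      rw [hddef]; simp only []; rw [hmv] at *; linarith
    have hlt : (∑ k, |A j k|) * b < K * b := by
      exact mul_lt_mul_of_pos_right (hrowK j) hb
    calc d t j ≤ (∑ k, |A j k|) * b := this
      _ < K * b := hlt
  -- conclude
  intro t ht i
  have hC : (0:ℝ) < Real.exp (K * t) := Real.exp_pos _
  by_contra hpos
  push_neg at hpos
  have hεbound := key (x t i / (2 * Real.exp (K * t))) (by positivity) t ht
  have hbb := (hxle t i).trans hεbound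
  have heq : x t i / (2 * Real.exp (K * t)) * Real.exp (K * t) = x t i / 2 := by
    field_simp
  rw [heq] at hbb
  linarith
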